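/- Suppose aᵢ = a for all i ∈ {1,…,n}, where a ≥ 2. Then the minimum of #Ap(Γₙ, x) over x ∈ {1, …, aⁿ} equals min{ a^k + λ₁ + λ₂ + ⋯ + λ_{n−k} : k ∈ {0, 1, …, n} }, i.e., min{1 + Σ_{i=1}^{n}λᵢ, a + Σ_{i=1}^{n−1}λᵢ, …, a^{n−1} + λ₁, aⁿ}. (This minimum is the second Feng–Rao number E(Γₙ, 2).) -/

import Mathlib

/-- A numerical semigroup: an additive submonoid of ℕ with finite complement. -/
def IsNumericalSemigroup (Γ : Set ℕ) : Prop :=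
  0 ∈ Γ ∧ (∀ x ∈ Γ, ∀ y ∈ Γ, x + y ∈ Γ) ∧ Γᶜ.Finite

/-- The Apéry set Ap(Γ,x) = {s ∈ Γ : s - x ∉ Γ}. -/
def Ap (Γ : Set ℕ) (x : ℕ) : Set ℕ := {s ∈ Γ | ∀ t ∈ Γ, s ≠ t + x}

/-- The inductive numerical semigroups Γ₀ = ℕ, Γᵢ = aᵢ·Γ_{i-1} ∪ (aᵢbᵢ + ℕ). -/
def IndSG (a b : ℕ → ℕ) : ℕ → Set ℕ
  | 0 => Set.univ
  | i + 1 => (fun x => a (i + 1) * x) '' IndSG a b i ∪ {x | a (i + 1) * b (i + 1) ≤ x}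

attribute [local instance] Classical.propDecidable

namespace FRaux

structure Good (q : ℕ) (a b lam : ℕ → ℕ) (n : ℕ) : Prop where
  hq : 2 ≤ q
  hac : ∀ i, 1 ≤ i → i ≤ n → a i = q
  hb1 : 1 ≤ b 1
  hbs : ∀ i, 1 ≤ i → i + 1 ≤ n → q * b i ≤ b (i + 1)
  hlam1 : lam 1 = b 1
  hlam : ∀ i, 2 ≤ i → i ≤ n → lam i = b i - q * b (i - 1)

variable {q : ℕ} {a b lam : ℕ → ℕ} {n : ℕ}

lemma mem_succ (a b : ℕ → ℕ) (i s : ℕ) :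
    s ∈ IndSG a b (i + 1) ↔ (∃ t ∈ IndSG a b i, a (i + 1) * t = s) ∨ a (i + 1) * b (i + 1) ≤ s := by
  show s ∈ _ '' _ ∪ _ ↔ _
  simp [Set.mem_image]

lemma zero_mem (a b : ℕ → ℕ) : ∀ m, 0 ∈ IndSG a b m
  | 0 => Set.mem_univ 0
  | m + 1 => by
      rw [mem_succ]
      exact Or.inl ⟨0, zero_mem a b m, mul_zero _⟩

lemma mem_of_conductor (hG : Good q a b lam n) {m : ℕ} (h1 : 1 ≤ m) (hmn : m ≤ n)
    {s : ℕ} (h : q * b m ≤ s) : s ∈ IndSG a b m := by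
  cases m with
  | zero => omega
  | succ i =>
    rw [mem_succ]
    right
    rwa [hG.hac _ h1 hmn]

lemma b_ge (hG : Good q a b lam n) : ∀ m, 1 ≤ m → m ≤ n → q ^ (m - 1) ≤ b m := by
  intro m
  induction m with
  | zero => omega
  | succ i ih =>
    intro _ hmn
    rcases Nat.eq_zero_or_pos i with rfl | hi
    · simpa using hG.hb1
    · have h1 : q ^ (i - 1) ≤ b i := ih hi (by omega)
      have h2 : q * b i ≤ b (i + 1) := hG.hbs i hi hmn
      have : q * q ^ (i - 1) ≤ q * b i := Nat.mul_le_mul_left q h1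
      have hpow : q ^ (i + 1 - 1) = q * q ^ (i - 1) := by
        obtain ⟨j, rfl⟩ := Nat.exists_eq_add_of_le hi
        rw [Nat.add_sub_cancel_left, Nat.add_comm 1 j, Nat.add_sub_cancel, pow_succ, mul_comm]
      omega

lemma dvd_of_mem_small (hG : Good q a b lam n) {m : ℕ} (h1 : 1 ≤ m) (hmn : m ≤ n)
    {s : ℕ} (hs : s ∈ IndSG a b m) (h3 : s < q * b m) : q ∣ s := by
  cases m with
  | zero => omega
  | succ i =>
   rw [mem_succ, hG.hac _ h1 hmn] at hs
   rcases hs with ⟨t, _, rfl⟩ | h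
   · exact Dvd.intro t rfl
   · omega

lemma not_mem_small (hG : Good q a b lam n) {m : ℕ} (h1 : 1 ≤ m) (hmn : m ≤ n)
    {s : ℕ} (h2 : ¬ q ∣ s) (h3 : s < q * b m) : s ∉ IndSG a b m :=
  fun hs => h2 (dvd_of_mem_small hG h1 hmn hs h3)

lemma mul_mem_iff (hG : Good q a b lam n) {i : ℕ} (hi : i + 1 ≤ n) (t : ℕ) :
    q * t ∈ IndSG a b (i + 1) ↔ t ∈ IndSG a b i := by
  have hq0 : 0 < q := by have := hG.hq; omega
  rw [mem_succ, hG.hac _ (by omega) hi]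
  constructor
  · rintro (⟨t', ht', heq⟩ | h)
    · obtain rfl : t' = t := by
        exact Nat.eq_of_mul_eq_mul_left hq0 heq
      exact ht'
    · have hbt : b (i + 1) ≤ t := Nat.le_of_mul_le_mul_left h hq0
      rcases Nat.eq_zero_or_pos i with rfl | hipos
      · exact Set.mem_univ t
      · exact mem_of_conductor hG hipos (by omega) (le_trans (hG.hbs i hipos hi) hbt)
  · intro ht
    exact Or.inl ⟨t, ht, rfl⟩


lemma ap_mem_iff (Γ : Set ℕ) (x s : ℕ) :
    s ∈ Ap Γ x ↔ s ∈ Γ ∧ (s < x ∨ s - x ∉ Γ) := by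
  constructor
  · rintro ⟨hs, h⟩
    refine ⟨hs, ?_⟩
    rcases Nat.lt_or_ge s x with h' | h'
    · exact Or.inl h'
    · refine Or.inr fun hc => h _ hc (by omega)
  · rintro ⟨hs, h⟩
    refine ⟨hs, fun t ht heq => ?_⟩
    rcases h with h | h
    · omega
    · exact h (by rw [heq] at *; simpa using ht)

lemma ap_univ (x : ℕ) : Ap Set.univ x = Set.Iio x := by
  ext s
  rw [ap_mem_iff]
  simp [Set.mem_Iio]

lemma ap_zero_ncard (a b : ℕ → ℕ) (x : ℕ) : (Ap (IndSG a b 0) x).ncard = x := by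
  show (Ap Set.univ x).ncard = x
  rw [ap_univ, ← Finset.coe_range, Set.ncard_coe_finset, Finset.card_range]

lemma ap_subset (hG : Good q a b lam n) {m : ℕ} (h1 : 1 ≤ m) (hmn : m ≤ n) (x : ℕ) :
    Ap (IndSG a b m) x ⊆ Set.Iio (q * b m + x) := by
  intro s hs
  rw [ap_mem_iff] at hs
  simp only [Set.mem_Iio]
  by_contra hc
  push_neg at hc
  have : s - x ∈ IndSG a b m := mem_of_conductor hG h1 hmn (by omega)
  rcases hs.2 with h | h
  · omega
  · exact h this

lemma ap_finite (hG : Good q a b lam n) {m : ℕ} (hmn : m ≤ n) (x : ℕ) :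
    (Ap (IndSG a b m) x).Finite := by
  rcases Nat.eq_zero_or_pos m with rfl | h1
  · show (Ap Set.univ x).Finite
    rw [ap_univ]; exact Set.finite_Iio x
  · exact (Set.finite_Iio (q * b m + x)).subset (ap_subset hG h1 hmn x)

/-- counting multiples of q in [q*c, q*c+q*L) -/
lemma card_dvd_block {q : ℕ} (hq : 0 < q) (c L : ℕ) :
    ((Finset.Ico (q * c) (q * c + q * L)).filter (fun s => q ∣ s)).card = L := by
  have : (Finset.Ico (q * c) (q * c + q * L)).filter (fun s => q ∣ s)
      = Finset.image (fun t => q * t) (Finset.Ico c (c + L)) := by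
    ext s
    simp only [Finset.mem_filter, Finset.mem_Ico, Finset.mem_image]
    constructor
    · rintro ⟨⟨hl, hr⟩, k, rfl⟩
      refine ⟨k, ⟨?_, ?_⟩, rfl⟩
      · exact Nat.le_of_mul_le_mul_left hl hq
      · rw [← Nat.mul_add] at hr
        exact Nat.lt_of_mul_lt_mul_left hr
    · rintro ⟨t, ⟨hl, hr⟩, rfl⟩
      exact ⟨⟨Nat.mul_le_mul_left q hl, by rw [← Nat.mul_add]; exact Nat.mul_lt_mul_left hq |>.mpr hr⟩, Dvd.intro t rfl⟩
  rw [this, Finset.card_image_of_injective _ (fun x y h => Nat.eq_of_mul_eq_mul_left hq h), Nat.card_Ico]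
  omega

/-- multiples of q in [q*c, q*c+u) : at most w + 1 where q*w ≤ u < q*w+q -/
lemma card_dvd_short {q : ℕ} (hq : 0 < q) {c u w : ℕ} (hw2 : u < q * w + q) :
    ((Finset.Ico (q * c) (q * c + u)).filter (fun s => q ∣ s)).card ≤ w + 1 := by
  have key : ((Finset.Ico (q * c) (q * c + u)).filter (fun s => q ∣ s)).card
      ≤ (Finset.Icc c (c + w)).card := by
    apply Finset.card_le_card_of_injOn (fun s => s / q)
    · intro s hs
      simp only [Finset.mem_coe, Finset.mem_filter, Finset.mem_Ico] at hs
      obtain ⟨⟨hl, hr⟩, k, hk⟩ := hs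
      subst hk
      have hk1 : c ≤ k := Nat.le_of_mul_le_mul_left hl hq
      have hk2 : k ≤ c + w := by
        have h3 : q * k < q * (c + w + 1) := by
          have : q * (c + w + 1) = q * c + (q * w + q) := by ring
          omega
        have := Nat.lt_of_mul_lt_mul_left h3
        omega
      simp only [Finset.mem_coe, Finset.mem_Icc, Nat.mul_div_cancel_left _ hq]
      exact ⟨hk1, hk2⟩
    · intro s hs t ht hst
      simp only [Finset.coe_filter, Set.mem_setOf_eq, Finset.mem_Ico] at hs ht
      try dsimp only at hst
      obtain ⟨_, k, hk⟩ := hs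
      obtain ⟨_, l, hl⟩ := ht
      rw [hk, hl, Nat.mul_div_cancel_left _ hq, Nat.mul_div_cancel_left _ hq] at hst
      rw [hk, hl, hst]
  have hc : (Finset.Icc c (c + w)).card = w + 1 := by
    rw [Nat.card_Icc]; omega
  exact key.trans (le_of_eq hc)

/-- s in [q*c, q*c+u), q ∣ s - u : at most w, where q*w < u < q*w+q and u ≤ q*c -/
lemma card_dvd_shift {q : ℕ} (hq : 0 < q) {c u w : ℕ} (hu : u ≤ q * c)
    (hw1 : q * w < u) (hw2 : u < q * w + q) :
    ((Finset.Ico (q * c) (q * c + u)).filter (fun s => q ∣ (s - u))).card ≤ w := by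
  have hwc : w < c := by
    have h3 : q * w < q * c := by omega
    exact Nat.lt_of_mul_lt_mul_left h3
  have key : ((Finset.Ico (q * c) (q * c + u)).filter (fun s => q ∣ (s - u))).card
      ≤ (Finset.Icc (c - w) (c - 1)).card := by
    apply Finset.card_le_card_of_injOn (fun s => (s - u) / q)
    · intro s hs
      simp only [Finset.mem_coe, Finset.mem_filter, Finset.mem_Ico] at hs
      obtain ⟨⟨hl, hr⟩, k, hk⟩ := hs
      have hs' : s = u + q * k := by omega
      have hk2 : k ≤ c - 1 := by
        have h4 : q * k < q * c := by omega
        have := Nat.lt_of_mul_lt_mul_left h4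
        omega
      have hk1 : c - w ≤ k := by
        by_contra hcon
        push_neg at hcon
        have h5 : q * (k + 1) ≤ q * (c - w) := Nat.mul_le_mul_left q (by omega)
        have h6 : q * (k + 1) = q * k + q := by ring
        have h7 : q * (c - w) = q * c - q * w := Nat.mul_sub q c w
        omega
      show (s - u) / q ∈ _
      rw [hk, Nat.mul_div_cancel_left _ hq]
      simp only [Finset.mem_coe, Finset.mem_Icc]
      exact ⟨hk1, hk2⟩
    · intro s hs t ht hst
      simp only [Finset.coe_filter, Set.mem_setOf_eq, Finset.mem_Ico] at hs ht
      try dsimp only at hst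
      obtain ⟨⟨hs1, _⟩, k, hk⟩ := hs
      obtain ⟨⟨ht1, _⟩, l, hl⟩ := ht
      rw [hk, hl, Nat.mul_div_cancel_left _ hq, Nat.mul_div_cancel_left _ hq] at hst
      subst hst
      omega
  have hc : (Finset.Icc (c - w) (c - 1)).card = w := by
    rw [Nat.card_Icc]; omega
  exact key.trans (le_of_eq hc)


lemma filter_mul_card (hG : Good q a b lam n) {m : ℕ} (h1 : 1 ≤ m) (hmn : m ≤ n) :
    ((Finset.Icc 1 (q * b m)).filter (fun s => s ∈ IndSG a b m)).card
      = ((Finset.Icc 1 (b m)).filter (fun t => t ∈ IndSG a b (m - 1))).card := by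
  have hq0 : 0 < q := by have := hG.hq; omega
  cases m with
  | zero => omega
  | succ i =>
    have himg : (Finset.Icc 1 (q * b (i + 1))).filter (fun s => s ∈ IndSG a b (i + 1))
        = Finset.image (fun t => q * t)
            ((Finset.Icc 1 (b (i + 1))).filter (fun t => t ∈ IndSG a b i)) := by
      ext s
      simp only [Finset.mem_filter, Finset.mem_Icc, Finset.mem_image]
      constructor
      · rintro ⟨⟨hs1, hs2⟩, hmem⟩
        have hdvd : q ∣ s := by
          rcases Nat.lt_or_ge s (q * b (i + 1)) with h | h
          · exact dvd_of_mem_small hG h1 hmn hmem h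
          · exact ⟨b (i + 1), by omega⟩
        obtain ⟨t, rfl⟩ := hdvd
        refine ⟨t, ⟨⟨Nat.pos_of_ne_zero (fun h => by subst h; simp at hs1), Nat.le_of_mul_le_mul_left hs2 hq0⟩, ?_⟩, rfl⟩
        exact (mul_mem_iff hG hmn t).mp hmem
      · rintro ⟨t, ⟨⟨ht1, ht2⟩, hmem⟩, rfl⟩
        refine ⟨⟨le_trans ht1 (Nat.le_mul_of_pos_left t hq0), Nat.mul_le_mul_left q ht2⟩, (mul_mem_iff hG hmn t).mpr hmem⟩
    rw [himg, Finset.card_image_of_injective _ (fun x y h => Nat.eq_of_mul_eq_mul_left hq0 h)]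
    rfl

lemma Nm_eq (hG : Good q a b lam n) : ∀ m, 1 ≤ m → m ≤ n →
    ((Finset.Icc 1 (b m)).filter (fun t => t ∈ IndSG a b (m - 1))).card
      = ∑ i ∈ Finset.Icc 1 m, lam i := by
  intro m
  induction m with
  | zero => omega
  | succ i ih =>
    intro _ hmn
    rcases Nat.eq_zero_or_pos i with rfl | hi
    · have : ((Finset.Icc 1 (b 1)).filter (fun t => t ∈ IndSG a b 0)).card = b 1 := by
        have h0 : ∀ x ∈ Finset.Icc 1 (b 1), x ∈ IndSG a b 0 := fun x _ => Set.mem_univ x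
        rw [Finset.filter_true_of_mem h0, Nat.card_Icc]
        omega
      rw [this, Finset.Icc_self, Finset.sum_singleton, hG.hlam1]
    · have hbi : q * b i ≤ b (i + 1) := hG.hbs i hi hmn
      have hsplit : Finset.Icc 1 (b (i + 1))
          = Finset.Icc 1 (q * b i) ∪ Finset.Icc (q * b i + 1) (b (i + 1)) := by
        ext x
        simp only [Finset.mem_Icc, Finset.mem_union]
        omega
      have hdisj : Disjoint ((Finset.Icc 1 (q * b i)).filter (fun t => t ∈ IndSG a b i))
          ((Finset.Icc (q * b i + 1) (b (i + 1))).filter (fun t => t ∈ IndSG a b i)) := by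
        rw [Finset.disjoint_left]
        intro x hx hx'
        simp only [Finset.mem_filter, Finset.mem_Icc] at hx hx'
        omega
      have hstep : ((Finset.Icc 1 (b (i + 1))).filter (fun t => t ∈ IndSG a b (i + 1 - 1))).card
          = ((Finset.Icc 1 (q * b i)).filter (fun t => t ∈ IndSG a b i)).card
            + ((Finset.Icc (q * b i + 1) (b (i + 1))).filter (fun t => t ∈ IndSG a b i)).card := by
        simp only [Nat.add_sub_cancel]
        rw [hsplit, Finset.filter_union, Finset.card_union_of_disjoint hdisj]
      have hsecond : ((Finset.Icc (q * b i + 1) (b (i + 1))).filter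
          (fun t => t ∈ IndSG a b i)).card = lam (i + 1) := by
        rw [Finset.filter_true_of_mem, Nat.card_Icc, hG.hlam (i + 1) (by omega) hmn]
        · simp
        · intro x hx
          simp only [Finset.mem_Icc] at hx
          exact mem_of_conductor hG hi (by omega) (by omega)
      have hfirst := filter_mul_card hG hi (by omega)
      rw [hstep, hsecond, hfirst, ih hi (by omega)]
      rw [Finset.sum_Icc_succ_top (by omega)]


lemma UB1 (hG : Good q a b lam n) {m : ℕ} (h1 : 1 ≤ m) (hmn : m ≤ n) :
    (Ap (IndSG a b m) 1).ncard ≤ 1 + ∑ i ∈ Finset.Icc 1 m, lam i := by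
  have hsub : Ap (IndSG a b m) 1 ⊆ ({0} : Set ℕ) ∪
      ↑((Finset.Icc 1 (q * b m)).filter (fun s => s ∈ IndSG a b m)) := by
    intro s hs
    rw [ap_mem_iff] at hs
    obtain ⟨hsm, hcase⟩ := hs
    rcases Nat.eq_zero_or_pos s with rfl | hspos
    · exact Or.inl rfl
    · right
      simp only [Finset.coe_filter, Set.mem_setOf_eq, Finset.mem_Icc]
      rcases hcase with h | h
      · omega
      · refine ⟨⟨hspos, ?_⟩, hsm⟩
        by_contra hc
        push_neg at hc
        exact h (mem_of_conductor hG h1 hmn (by omega))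
  calc (Ap (IndSG a b m) 1).ncard
      ≤ (({0} : Set ℕ) ∪ ↑((Finset.Icc 1 (q * b m)).filter (fun s => s ∈ IndSG a b m))).ncard :=
        Set.ncard_le_ncard hsub ((Set.finite_singleton 0).union (Finset.finite_toSet _))
    _ ≤ ({0} : Set ℕ).ncard
        + (↑((Finset.Icc 1 (q * b m)).filter (fun s => s ∈ IndSG a b m)) : Set ℕ).ncard :=
        Set.ncard_union_le _ _
    _ = 1 + ∑ i ∈ Finset.Icc 1 m, lam i := by
        rw [Set.ncard_singleton, Set.ncard_coe_finset, filter_mul_card hG h1 hmn,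
          Nm_eq hG m h1 hmn]

lemma R1 (hG : Good q a b lam n) {i : ℕ} (hi : i + 1 ≤ n) {x' : ℕ} (hx1 : 1 ≤ x')
    (hx2 : x' ≤ q ^ i) :
    (Ap (IndSG a b (i + 1)) (q * x')).ncard = (q * x' - x') + (Ap (IndSG a b i) x').ncard := by
  have hq0 : 0 < q := by have := hG.hq; omega
  have hbx : x' ≤ b (i + 1) := le_trans (by simpa using hx2) (b_ge hG (i + 1) (by omega) hi)
  have hEq : Ap (IndSG a b (i + 1)) (q * x')
      = ↑((Finset.Ico (q * (b (i + 1))) (q * (b (i + 1)) + q * x')).filter (fun s => ¬ q ∣ s))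
        ∪ (fun t => q * t) '' (Ap (IndSG a b i) x') := by
    ext s
    rw [ap_mem_iff]
    simp only [Set.mem_union, Finset.coe_filter, Set.mem_setOf_eq, Finset.mem_Ico,
      Set.mem_image]
    constructor
    · rintro ⟨hsm, hcase⟩
      by_cases hdvd : q ∣ s
      · obtain ⟨t, rfl⟩ := hdvd
        right
        refine ⟨t, ?_, rfl⟩
        rw [ap_mem_iff]
        refine ⟨(mul_mem_iff hG hi t).mp hsm, ?_⟩
        rcases Nat.lt_or_ge t x' with h | h
        · exact Or.inl h
        · right
          rcases hcase with h' | h'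
          · have := Nat.mul_le_mul_left q h
            omega
          · intro hc
            apply h'
            have hmm := (mul_mem_iff hG hi (t - x')).mpr hc
            rwa [Nat.mul_sub] at hmm
      · left
        have hge : q * (b (i + 1)) ≤ s := by
          by_contra hc
          push_neg at hc
          exact hdvd (dvd_of_mem_small hG (by omega) hi hsm hc)
        have hxB : q * x' ≤ q * (b (i + 1)) := Nat.mul_le_mul_left q hbx
        rcases hcase with h' | h'
        · omega
        · refine ⟨⟨hge, ?_⟩, hdvd⟩
          by_contra hc
          push_neg at hc
          exact h' (mem_of_conductor hG (by omega) hi (by omega))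
    · rintro (⟨⟨hge, hlt⟩, hdvd⟩ | ⟨t, ht, rfl⟩)
      · have hxB : q * x' ≤ q * (b (i + 1)) := Nat.mul_le_mul_left q hbx
        refine ⟨mem_of_conductor hG (by omega) hi hge, Or.inr ?_⟩
        apply not_mem_small hG (by omega) hi
        · intro hc
          have : q ∣ s - q * x' + q * x' := Nat.dvd_add hc ⟨x', rfl⟩
          rw [Nat.sub_add_cancel (by omega)] at this
          exact hdvd this
        · omega
      · rw [ap_mem_iff] at ht
        refine ⟨(mul_mem_iff hG hi t).mpr ht.1, ?_⟩
        rcases ht.2 with h | h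
        · exact Or.inl (by exact (Nat.mul_lt_mul_left hq0).mpr h)
        · right
          intro hc
          rw [← Nat.mul_sub] at hc
          exact h ((mul_mem_iff hG hi (t - x')).mp hc)
  have hdisj : Disjoint
      (↑((Finset.Ico (q * (b (i + 1))) (q * (b (i + 1)) + q * x')).filter (fun s => ¬ q ∣ s)) : Set ℕ)
      ((fun t => q * t) '' (Ap (IndSG a b i) x')) := by
    rw [Set.disjoint_left]
    rintro s hs ⟨t, _, rfl⟩
    simp only [Finset.coe_filter, Set.mem_setOf_eq] at hs
    exact hs.2 ⟨t, rfl⟩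
  have hinj : Function.Injective (fun t : ℕ => q * t) :=
    fun x y h => Nat.eq_of_mul_eq_mul_left hq0 h
  rw [hEq, Set.ncard_union_eq hdisj (Finset.finite_toSet _)
      ((ap_finite hG (by omega) x').image _),
    Set.ncard_coe_finset, Set.ncard_image_of_injective _ hinj]
  congr 1
  have hcards := Finset.card_filter_add_card_filter_not
    (s := Finset.Ico (q * (b (i + 1))) (q * (b (i + 1)) + q * x')) (p := fun s => q ∣ s)
  rw [card_dvd_block hq0 (b (i + 1)) x', Nat.card_Ico] at hcards
  omega

lemma LBcop (hG : Good q a b lam n) {m : ℕ} (h1 : 1 ≤ m) (hmn : m ≤ n) {u : ℕ}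
    (hu1 : 1 ≤ u) (hu2 : u ≤ q ^ m) (hcop : ¬ q ∣ u) :
    1 + ∑ i ∈ Finset.Icc 1 m, lam i ≤ (Ap (IndSG a b m) u).ncard := by
  have hq0 : 0 < q := by have := hG.hq; omega
  cases m with
  | zero => omega
  | succ i =>
    obtain ⟨w, hw1, hw2⟩ : ∃ w, q * w < u ∧ u < q * w + q := by
      refine ⟨u / q, ?_, ?_⟩
      · have h := Nat.div_add_mod u q
        have : u % q ≠ 0 := fun hc => hcop (Nat.dvd_iff_mod_eq_zero.mpr hc)
        omega
      · have h := Nat.div_add_mod u q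
        have := Nat.mod_lt u hq0
        omega
    set c := b (i + 1) with hc
    have hqic : q ^ i ≤ c := by simpa using b_ge hG (i + 1) (by omega) hmn
    have hucq : u < q * c := by
      have h2 : q ^ (i + 1) = q * q ^ i := by rw [pow_succ, mul_comm]
      have h3 : q * q ^ i ≤ q * c := Nat.mul_le_mul_left q hqic
      have : u ≠ q * c := fun h => hcop (h ▸ ⟨c, rfl⟩)
      omega
    have hwc : w < c := Nat.lt_of_mul_lt_mul_left (a := q) (by omega)
    -- the finset of Apery elements we exhibit
    set SBsrc := ((Finset.Icc (w + 1) (c - 1)).filter (fun t => t ∈ IndSG a b i))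
      ∪ Finset.Icc c (c + w) with hSBsrc
    set SB := Finset.image (fun t => q * t) SBsrc with hSB
    have hmemSB : ∀ s ∈ SB, s ∈ Ap (IndSG a b (i + 1)) u := by
      intro s hs
      rw [hSB] at hs
      simp only [Finset.mem_image] at hs
      obtain ⟨t, ht, rfl⟩ := hs
      have htw : w + 1 ≤ t ∧ t ≤ c + w := by
        rw [hSBsrc] at ht
        simp only [Finset.mem_union, Finset.mem_filter, Finset.mem_Icc] at ht
        rcases ht with ⟨⟨h1', h2'⟩, _⟩ | ⟨h1', h2'⟩ <;> omega
      have hmem : q * t ∈ IndSG a b (i + 1) := by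
        rw [hSBsrc] at ht
        simp only [Finset.mem_union, Finset.mem_filter, Finset.mem_Icc] at ht
        rcases ht with ⟨_, hmem'⟩ | ⟨h1', _⟩
        · exact (mul_mem_iff hG hmn t).mpr hmem'
        · exact mem_of_conductor hG (by omega) hmn (Nat.mul_le_mul_left q h1')
      have hlow : q * (w + 1) ≤ q * t := Nat.mul_le_mul_left q htw.1
      have hhigh : q * t ≤ q * (c + w) := Nat.mul_le_mul_left q htw.2
      have he1 : q * (w + 1) = q * w + q := by ring
      have he2 : q * (c + w) = q * c + q * w := by ring
      rw [ap_mem_iff]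
      refine ⟨hmem, Or.inr ?_⟩
      apply not_mem_small hG (by omega) hmn
      · intro hdvd
        have : q ∣ q * t - (q * t - u) := Nat.dvd_sub ⟨t, rfl⟩ hdvd
        rw [Nat.sub_sub_self (by omega)] at this
        exact hcop this
      · rw [← hc]
        omega
    have hsub : ↑(insert 0 SB) ⊆ Ap (IndSG a b (i + 1)) u := by
      intro s hs
      simp only [Finset.coe_insert, Set.mem_insert_iff, Finset.mem_coe] at hs
      rcases hs with rfl | hs
      · rw [ap_mem_iff]
        exact ⟨zero_mem a b _, Or.inl (by omega)⟩
      · exact hmemSB s hs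
    have hDge : (insert 0 SB).card ≤ (Ap (IndSG a b (i + 1)) u).ncard := by
      rw [← Set.ncard_coe_finset]
      exact Set.ncard_le_ncard hsub (ap_finite hG hmn u)
    have h0SB : 0 ∉ SB := by
      rw [hSB]
      simp only [Finset.mem_image, not_exists]
      rintro t ⟨ht, hq0'⟩
      have htw : w + 1 ≤ t := by
        rw [hSBsrc] at ht
        simp only [Finset.mem_union, Finset.mem_filter, Finset.mem_Icc] at ht
        rcases ht with ⟨⟨h1', _⟩, _⟩ | ⟨h1', _⟩ <;> omega
      have : 0 < q * t := Nat.mul_pos hq0 (by omega)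
      omega
    have hcardSB : SB.card = ((Finset.Icc (w + 1) (c - 1)).filter
        (fun t => t ∈ IndSG a b i)).card + (w + 1) := by
      rw [hSB, Finset.card_image_of_injective _ (fun x y h => Nat.eq_of_mul_eq_mul_left hq0 h),
        hSBsrc, Finset.card_union_of_disjoint, Nat.card_Icc]
      · omega
      · rw [Finset.disjoint_left]
        intro t ht ht'
        simp only [Finset.mem_filter, Finset.mem_Icc] at ht ht'
        omega
    -- Λ ≤ w + 1 + F
    have hLam : ∑ j ∈ Finset.Icc 1 (i + 1), lam j
        ≤ w + (((Finset.Icc (w + 1) (c - 1)).filter (fun t => t ∈ IndSG a b i)).card + 1) := by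
      have hNm := Nm_eq hG (i + 1) (by omega) hmn
      simp only [Nat.add_sub_cancel] at hNm
      rw [← hNm, ← hc]
      have hsub2 : (Finset.Icc 1 c).filter (fun t => t ∈ IndSG a b i)
          ⊆ Finset.Icc 1 w ∪ (((Finset.Icc (w + 1) (c - 1)).filter
            (fun t => t ∈ IndSG a b i)) ∪ {c}) := by
        intro t ht
        simp only [Finset.mem_filter, Finset.mem_Icc] at ht
        simp only [Finset.mem_union, Finset.mem_filter, Finset.mem_Icc, Finset.mem_singleton]
        rcases Nat.lt_or_ge w t with h | h
        · rcases Nat.lt_or_ge t c with h' | h'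
          · exact Or.inr (Or.inl ⟨⟨by omega, by omega⟩, ht.2⟩)
          · exact Or.inr (Or.inr (by omega))
        · exact Or.inl ⟨ht.1.1, h⟩
      calc ((Finset.Icc 1 c).filter (fun t => t ∈ IndSG a b i)).card
          ≤ (Finset.Icc 1 w ∪ (((Finset.Icc (w + 1) (c - 1)).filter
              (fun t => t ∈ IndSG a b i)) ∪ {c})).card := Finset.card_le_card hsub2
        _ ≤ (Finset.Icc 1 w).card + (((Finset.Icc (w + 1) (c - 1)).filter
              (fun t => t ∈ IndSG a b i)) ∪ {c}).card := Finset.card_union_le _ _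
        _ ≤ (Finset.Icc 1 w).card + (((Finset.Icc (w + 1) (c - 1)).filter
              (fun t => t ∈ IndSG a b i)).card + 1) := by
            have := Finset.card_union_le (((Finset.Icc (w + 1) (c - 1)).filter
              (fun t => t ∈ IndSG a b i))) ({c} : Finset ℕ)
            simp only [Finset.card_singleton] at this
            omega
        _ = w + (((Finset.Icc (w + 1) (c - 1)).filter
              (fun t => t ∈ IndSG a b i)).card + 1) := by rw [Nat.card_Icc]; omega
    have hfinal : (insert 0 SB).card = 1 + SB.card := by
      rw [Finset.card_insert_of_notMem h0SB]
      omega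
    omega


lemma UBmain (hG : Good q a b lam n) :
    ∀ k m, k ≤ m → m ≤ n →
      (Ap (IndSG a b m) (q ^ k)).ncard ≤ q ^ k + ∑ i ∈ Finset.Icc 1 (m - k), lam i := by
  have hq0 : 0 < q := by have := hG.hq; omega
  intro k
  induction k with
  | zero =>
    intro m _ hmn
    rcases Nat.eq_zero_or_pos m with rfl | h1
    · rw [pow_zero, ap_zero_ncard]
      omega
    · rw [pow_zero]
      simpa using UB1 hG h1 hmn
  | succ j ih =>
    intro m hkm hmn
    cases m with
    | zero => omega
    | succ i =>
      have hji : j ≤ i := by omega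
      have hrec : (Ap (IndSG a b (i + 1)) (q * q ^ j)).ncard
          = (q * q ^ j - q ^ j) + (Ap (IndSG a b i) (q ^ j)).ncard :=
        R1 hG hmn (Nat.one_le_pow j q hq0) (Nat.pow_le_pow_right (by omega) hji)
      have hpow : q ^ (j + 1) = q * q ^ j := by rw [pow_succ, mul_comm]
      have hih := ih i hji (by omega)
      have hle : q ^ j ≤ q * q ^ j := Nat.le_mul_of_pos_left _ hq0
      have hsub : (i + 1) - (j + 1) = i - j := by omega
      rw [hpow, hrec, hsub]
      omega

lemma LBmain (hG : Good q a b lam n) :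
    ∀ m, m ≤ n → ∀ x, 1 ≤ x → x ≤ q ^ m →
      ∃ k, k ≤ m ∧ q ^ k ≤ x ∧
        q ^ k + ∑ i ∈ Finset.Icc 1 (m - k), lam i ≤ (Ap (IndSG a b m) x).ncard := by
  have hq0 : 0 < q := by have := hG.hq; omega
  intro m
  induction m with
  | zero =>
    intro _ x hx1 hx2
    refine ⟨0, le_refl 0, by simpa using hx1, ?_⟩
    rw [pow_zero] at hx2 ⊢
    have hx : x = 1 := by omega
    subst hx
    rw [ap_zero_ncard]
    simp
  | succ i ih =>
    intro hmn x hx1 hx2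
    by_cases hdvd : q ∣ x
    · obtain ⟨x', rfl⟩ := hdvd
      have hx'1 : 1 ≤ x' := by
        rcases Nat.eq_zero_or_pos x' with rfl | h
        · simp at hx1
        · exact h
      have hx'2 : x' ≤ q ^ i := by
        have hpow : q ^ (i + 1) = q * q ^ i := by rw [pow_succ, mul_comm]
        rw [hpow] at hx2
        exact Nat.le_of_mul_le_mul_left hx2 hq0
      obtain ⟨k, hk, hqk, hle⟩ := ih (by omega) x' hx'1 hx'2
      refine ⟨k + 1, by omega, ?_, ?_⟩
      · have : q ^ (k + 1) = q * q ^ k := by rw [pow_succ, mul_comm]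
        rw [this]
        exact Nat.mul_le_mul_left q hqk
      · have hrec := R1 hG hmn hx'1 hx'2
        have hsub : (i + 1) - (k + 1) = i - k := by omega
        have hpow : q ^ (k + 1) = q * q ^ k := by rw [pow_succ, mul_comm]
        obtain ⟨d, hd⟩ := Nat.exists_eq_add_of_le hqk
        have hxd : q * x' = q * q ^ k + q * d := by rw [hd, Nat.mul_add]
        have hdd : d ≤ q * d := Nat.le_mul_of_pos_left _ hq0
        have hPA : q ^ k ≤ q * q ^ k := Nat.le_mul_of_pos_left _ hq0
        rw [hsub, hpow, hrec]
        omega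
    · refine ⟨0, by omega, by simpa using hx1, ?_⟩
      rw [pow_zero, Nat.sub_zero]
      exact LBcop hG (by omega) hmn hx1 hx2 hdvd

end FRaux

/-- In the constant case `aᵢ = q` for all `i`, the second Feng–Rao number
`E(Γₙ,2) = min_{1 ≤ x ≤ qⁿ} #Ap(Γₙ,x)` equals
`min_{0 ≤ k ≤ n} (q^k + λ₁ + ⋯ + λ_{n-k})`. -/
theorem stmt12 (n : ℕ) (hn : 1 ≤ n) (a b : ℕ → ℕ)
    (ha : ∀ i, 1 ≤ i → i ≤ n → 2 ≤ a i)
    (hb1 : 1 ≤ b 1)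
    (hb : ∀ i, 1 ≤ i → i + 1 ≤ n → a i * b i ≤ b (i + 1))
    (q : ℕ) (hq : 2 ≤ q) (haconst : ∀ i, 1 ≤ i → i ≤ n → a i = q)
    (lam : ℕ → ℕ)
    (hlam1 : lam 1 = b 1)
    (hlam : ∀ i, 2 ≤ i → i ≤ n → lam i = b i - a (i - 1) * b (i - 1)) :
    sInf {m | ∃ x, 1 ≤ x ∧ x ≤ q ^ n ∧ m = (Ap (IndSG a b n) x).ncard}
      = sInf {m | ∃ k, k ≤ n ∧ m = q ^ k + ∑ i ∈ Finset.Icc 1 (n - k), lam i} := by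
  have hq0 : 0 < q := by omega
  have hG : FRaux.Good q a b lam n := by
    refine ⟨hq, haconst, hb1, ?_, hlam1, ?_⟩
    · intro i h1 h2
      have h := hb i h1 h2
      rwa [haconst i h1 (by omega)] at h
    · intro i h2 hin
      rw [hlam i h2 hin, haconst (i - 1) (by omega) (by omega)]
  apply le_antisymm
  · have hne : {m | ∃ k, k ≤ n ∧ m = q ^ k + ∑ i ∈ Finset.Icc 1 (n - k), lam i}.Nonempty :=
      ⟨q ^ 0 + ∑ i ∈ Finset.Icc 1 (n - 0), lam i, 0, Nat.zero_le n, rfl⟩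
    obtain ⟨k, hk, heq⟩ := Nat.sInf_mem hne
    have hmem : (Ap (IndSG a b n) (q ^ k)).ncard
        ∈ {m | ∃ x, 1 ≤ x ∧ x ≤ q ^ n ∧ m = (Ap (IndSG a b n) x).ncard} :=
      ⟨q ^ k, Nat.one_le_pow k q hq0, Nat.pow_le_pow_right (by omega) hk, rfl⟩
    calc sInf {m | ∃ x, 1 ≤ x ∧ x ≤ q ^ n ∧ m = (Ap (IndSG a b n) x).ncard}
        ≤ (Ap (IndSG a b n) (q ^ k)).ncard := Nat.sInf_le hmem
      _ ≤ q ^ k + ∑ i ∈ Finset.Icc 1 (n - k), lam i := FRaux.UBmain hG k n hk le_rfl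
      _ = sInf {m | ∃ k, k ≤ n ∧ m = q ^ k + ∑ i ∈ Finset.Icc 1 (n - k), lam i} := heq.symm
  · have hne : {m | ∃ x, 1 ≤ x ∧ x ≤ q ^ n ∧ m = (Ap (IndSG a b n) x).ncard}.Nonempty :=
      ⟨(Ap (IndSG a b n) 1).ncard, 1, le_rfl, Nat.one_le_pow n q hq0, rfl⟩
    obtain ⟨x, hx1, hx2, heq⟩ := Nat.sInf_mem hne
    obtain ⟨k, hk, _, hle⟩ := FRaux.LBmain hG n le_rfl x hx1 hx2
    calc sInf {m | ∃ k, k ≤ n ∧ m = q ^ k + ∑ i ∈ Finset.Icc 1 (n - k), lam i}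
        ≤ q ^ k + ∑ i ∈ Finset.Icc 1 (n - k), lam i := Nat.sInf_le ⟨k, hk, rfl⟩
      _ ≤ (Ap (IndSG a b n) x).ncard := hle
      _ = sInf {m | ∃ x, 1 ≤ x ∧ x ≤ q ^ n ∧ m = (Ap (IndSG a b n) x).ncard} := heq.symm
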